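/- Let T, s, d, d₀ be positive integers with s ≥ T and d ≥ d₀. Let Γ = [χ₁, …, χ_T] ∈ ℝ^{s×T}, let D_i ∈ ℝ^{d×d₀} for i ∈ [T], and let r_i ∈ ℝ^{d₀} for i ∈ [T]; set G := Σ_{i=1}^T (χ_i ⊗ I_d) D_i r_i ∈ ℝ^{sd} and ‖R‖₂ := (Σ_{i=1}^T ‖r_i‖₂²)^{1/2}. Then σ_min(Γ) · min_{i ∈ [T]} σ_min(D_i) · ‖R‖₂ ≤ ‖G‖₂ ≤ σ_max(Γ) · max_{i ∈ [T]} σ_max(D_i) · ‖R‖₂. (In the paper, G equals the negative gradient with respect to the skip weight S̃^l of the squared loss C(W) = ½Σ_i‖F(W,x^{(i)}) − y^{(i)}‖², with Γ the matrix of skipped features χ^{l(i)}, D_i = Λ̃^l(x^{(i)})(Υ̃^{l−1}(x^{(i)}))ᵀ, r_i the residuals, and ‖R‖₂ = √(2C(W)).) -/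

import Mathlib

open Matrix

/-- The Euclidean (ℓ²) norm of a vector. -/
noncomputable def enorm2 {ι : Type*} [Fintype ι] (v : ι → ℝ) : ℝ :=
  Real.sqrt (∑ i, v i ^ 2)

/-- The largest singular value `σ_max(A) = max_{‖u‖₂=1} ‖Au‖₂` (the spectral norm). -/
noncomputable def smax {ι ι' : Type*} [Fintype ι] [Fintype ι'] (A : Matrix ι ι' ℝ) : ℝ :=
  ⨆ u : {u : ι' → ℝ // enorm2 u = 1}, enorm2 (A.mulVec u.1)

/-- The smallest singular value `σ_min(A) = min_{‖u‖₂=1} ‖Au‖₂`. -/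
noncomputable def smin {ι ι' : Type*} [Fintype ι] [Fintype ι'] (A : Matrix ι ι' ℝ) : ℝ :=
  ⨅ u : {u : ι' → ℝ // enorm2 u = 1}, enorm2 (A.mulVec u.1)

lemma my_enorm_nonneg {ι : Type*} [Fintype ι] (v : ι → ℝ) : 0 ≤ enorm2 v := Real.sqrt_nonneg _

lemma my_enorm_sq {ι : Type*} [Fintype ι] (v : ι → ℝ) : enorm2 v ^ 2 = ∑ i, v i ^ 2 :=
  Real.sq_sqrt (Finset.sum_nonneg fun i _ => sq_nonneg _)

lemma my_sphere_bdd {ι ι' : Type*} [Fintype ι] [Fintype ι'] (A : Matrix ι ι' ℝ) :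
    BddAbove (Set.range fun u : {u : ι' → ℝ // enorm2 u = 1} => enorm2 (A.mulVec u.1)) := by
  refine ⟨Real.sqrt (∑ j, ∑ i, A j i ^ 2), ?_⟩
  rintro x ⟨⟨u, hu⟩, rfl⟩
  have hu2 : ∑ i, u i ^ 2 = 1 := by
    have h := my_enorm_sq u
    rw [hu] at h; simpa using h.symm
  simp only [enorm2, Matrix.mulVec, dotProduct]
  apply Real.sqrt_le_sqrt
  refine Finset.sum_le_sum fun j _ => ?_
  calc (∑ i, A j i * u i) ^ 2 ≤ (∑ i, A j i ^ 2) * ∑ i, u i ^ 2 :=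
        Finset.sum_mul_sq_le_sq_mul_sq _ _ _
    _ = ∑ i, A j i ^ 2 := by rw [hu2, mul_one]

lemma my_smin_nonneg {ι ι' : Type*} [Fintype ι] [Fintype ι'] (A : Matrix ι ι' ℝ) :
    0 ≤ smin A := Real.iInf_nonneg fun u => my_enorm_nonneg _

lemma my_smax_nonneg {ι ι' : Type*} [Fintype ι] [Fintype ι'] (A : Matrix ι ι' ℝ)
    (hne : ∃ u : ι' → ℝ, enorm2 u = 1) : 0 ≤ smax A := by
  obtain ⟨u₀, hu₀⟩ := hne
  exact le_trans (my_enorm_nonneg _) (le_ciSup (my_sphere_bdd A) ⟨u₀, hu₀⟩)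

lemma my_key {ι ι' : Type*} [Fintype ι] [Fintype ι'] (A : Matrix ι ι' ℝ)
    (hne : ∃ u : ι' → ℝ, enorm2 u = 1) (v : ι' → ℝ) :
    smin A ^ 2 * ∑ i, v i ^ 2 ≤ ∑ j, A.mulVec v j ^ 2 ∧
      ∑ j, A.mulVec v j ^ 2 ≤ smax A ^ 2 * ∑ i, v i ^ 2 := by
  by_cases hv : ∑ i, v i ^ 2 = 0
  · have hv0 : v = 0 := by
      funext i
      have := (Finset.sum_eq_zero_iff_of_nonneg (fun i _ => sq_nonneg (v i))).mp hv i
        (Finset.mem_univ i)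
      exact pow_eq_zero_iff two_ne_zero |>.mp this
    subst hv0
    simp [Matrix.mulVec_zero]
  · have hS : 0 < ∑ i, v i ^ 2 :=
      lt_of_le_of_ne (Finset.sum_nonneg fun i _ => sq_nonneg _) (Ne.symm hv)
    set c : ℝ := Real.sqrt (∑ i, v i ^ 2) with hc
    have hcpos : 0 < c := Real.sqrt_pos.mpr hS
    have hc2 : c ^ 2 = ∑ i, v i ^ 2 := Real.sq_sqrt hS.le
    set u : ι' → ℝ := c⁻¹ • v with hu
    have hu1 : enorm2 u = 1 := by
      simp only [enorm2, hu, Pi.smul_apply, smul_eq_mul, mul_pow]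
      rw [← Finset.mul_sum, ← hc2, ← mul_pow, inv_mul_cancel₀ hcpos.ne', one_pow, Real.sqrt_one]
    have hAu : A.mulVec v = c • A.mulVec u := by
      rw [hu, Matrix.mulVec_smul]
      rw [smul_smul, mul_inv_cancel₀ hcpos.ne', one_smul]
    have hsum : ∑ j, A.mulVec v j ^ 2 = c ^ 2 * ∑ j, A.mulVec u j ^ 2 := by
      rw [hAu]
      simp only [Pi.smul_apply, smul_eq_mul, mul_pow, Finset.mul_sum]
    have hlow : smin A ≤ enorm2 (A.mulVec u) := by
      have : BddBelow (Set.range fun p : {u : ι' → ℝ // enorm2 u = 1} => enorm2 (A.mulVec p.1)) :=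
        ⟨0, by rintro x ⟨p, rfl⟩; exact my_enorm_nonneg _⟩
      exact ciInf_le this ⟨u, hu1⟩
    have hhigh : enorm2 (A.mulVec u) ≤ smax A := le_ciSup (my_sphere_bdd A) ⟨u, hu1⟩
    have hAu2 : enorm2 (A.mulVec u) ^ 2 = ∑ j, A.mulVec u j ^ 2 := my_enorm_sq _
    constructor
    · rw [hsum, ← hc2, ← hAu2]
      have h1 : smin A ^ 2 ≤ enorm2 (A.mulVec u) ^ 2 :=
        pow_le_pow_left₀ (my_smin_nonneg A) hlow 2
      nlinarith [sq_nonneg c]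
    · rw [hsum, ← hc2, ← hAu2]
      have h1 : enorm2 (A.mulVec u) ^ 2 ≤ smax A ^ 2 :=
        pow_le_pow_left₀ (my_enorm_nonneg _) hhigh 2
      nlinarith [sq_nonneg c]

lemma my_sphere_ne {n : ℕ} (hn : 0 < n) : ∃ u : Fin n → ℝ, enorm2 u = 1 := by
  refine ⟨Pi.single ⟨0, hn⟩ 1, ?_⟩
  simp [enorm2, Pi.single_apply]

/-- Bounds for the (negative) gradient of the loss with respect to the
skip weights: with `Γ = [χ₁, …, χ_T] ∈ ℝ^{s×T}` (`s ≥ T`), `D_i ∈ ℝ^{d×d₀}` (`d ≥ d₀`),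
residuals `r_i ∈ ℝ^{d₀}`, and `G = Σ_i (χ_i ⊗ I_d) D_i r_i ∈ ℝ^{sd}` (where
`(χ ⊗ I_d)w` stacks the blocks `χ_j w`), one has
`σ_min(Γ) · min_i σ_min(D_i) · ‖R‖₂ ≤ ‖G‖₂ ≤ σ_max(Γ) · max_i σ_max(D_i) · ‖R‖₂`,
with `‖R‖₂ = (Σ_i ‖r_i‖₂²)^{1/2}`. -/
theorem stmt_18 {T s d d₀ : ℕ}
    (hT : 0 < T) (hs : 0 < s) (hd : 0 < d) (hd₀ : 0 < d₀)
    (hsT : s ≥ T) (hdd : d ≥ d₀)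
    (χ : Fin T → Fin s → ℝ)
    (Dm : Fin T → Matrix (Fin d) (Fin d₀) ℝ)
    (r : Fin T → Fin d₀ → ℝ)
    (Γ : Matrix (Fin s) (Fin T) ℝ) (hΓ : ∀ j i, Γ j i = χ i j)
    (G : Fin s × Fin d → ℝ)
    (hG : ∀ j a, G (j, a) = ∑ i, χ i j * (Dm i).mulVec (r i) a)
    (Rnorm : ℝ) (hR : Rnorm = Real.sqrt (∑ i, ∑ a, r i a ^ 2)) :
    smin Γ * (⨅ i, smin (Dm i)) * Rnorm ≤ enorm2 G ∧
    enorm2 G ≤ smax Γ * (⨆ i, smax (Dm i)) * Rnorm := by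
  have hsphT := my_sphere_ne hT
  have hsphd₀ := my_sphere_ne hd₀
  set mI := ⨅ i, smin (Dm i) with hmI
  set MS := ⨆ i, smax (Dm i) with hMS
  have hmI0 : 0 ≤ mI := Real.iInf_nonneg fun i => my_smin_nonneg _
  have hMS0 : 0 ≤ MS :=
    le_trans (my_smax_nonneg (Dm ⟨0, hT⟩) hsphd₀)
      (le_ciSup (f := fun i => smax (Dm i)) (Set.finite_range _).bddAbove (⟨0, hT⟩ : Fin T))
  have hmI_le : ∀ i, mI ≤ smin (Dm i) := fun i => ciInf_le (f := fun i => smin (Dm i)) (Set.finite_range _).bddBelow i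
  have hMS_ge : ∀ i, smax (Dm i) ≤ MS := fun i => le_ciSup (f := fun i => smax (Dm i)) (Set.finite_range _).bddAbove i
  have hR0 : 0 ≤ Rnorm := hR ▸ Real.sqrt_nonneg _
  have hR2 : Rnorm ^ 2 = ∑ i, ∑ a, r i a ^ 2 := by
    rw [hR]
    exact Real.sq_sqrt (Finset.sum_nonneg fun i _ =>
      Finset.sum_nonneg fun a _ => sq_nonneg _)
  have hGsum : enorm2 G ^ 2 = ∑ a, ∑ j, G (j, a) ^ 2 := by
    rw [my_enorm_sq, Fintype.sum_prod_type]
    exact Finset.sum_comm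
  have hGa : ∀ (a : Fin d) (j : Fin s),
      G (j, a) = Γ.mulVec (fun i => (Dm i).mulVec (r i) a) j := by
    intro a j
    rw [hG]
    simp [Matrix.mulVec, dotProduct, hΓ]
  have key1 := fun a : Fin d => my_key Γ hsphT (fun i => (Dm i).mulVec (r i) a)
  have key2 := fun i : Fin T => my_key (Dm i) hsphd₀ (r i)
  have hG2 : enorm2 G ^ 2 =
      ∑ a, ∑ j, (Γ.mulVec (fun i => (Dm i).mulVec (r i) a) j) ^ 2 := by
    rw [hGsum]
    exact Finset.sum_congr rfl fun a _ => Finset.sum_congr rfl fun j _ => by rw [hGa a j]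
  have hmid : ∑ a, ∑ i, ((Dm i).mulVec (r i) a) ^ 2
      = ∑ i, ∑ a, ((Dm i).mulVec (r i) a) ^ 2 := Finset.sum_comm
  constructor
  · have h2 : (smin Γ * mI * Rnorm) ^ 2 ≤ enorm2 G ^ 2 := by
      rw [hG2, mul_pow, mul_pow, hR2]
      calc smin Γ ^ 2 * mI ^ 2 * (∑ i, ∑ a, r i a ^ 2)
          ≤ smin Γ ^ 2 * (∑ i, ∑ a, ((Dm i).mulVec (r i) a) ^ 2) := by
            rw [mul_assoc]
            refine mul_le_mul_of_nonneg_left ?_ (sq_nonneg _)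
            rw [Finset.mul_sum]
            refine Finset.sum_le_sum fun i _ => ?_
            exact le_trans
              (mul_le_mul_of_nonneg_right (pow_le_pow_left₀ hmI0 (hmI_le i) 2)
                (Finset.sum_nonneg fun a _ => sq_nonneg _)) (key2 i).1
        _ = ∑ a, smin Γ ^ 2 * ∑ i, ((Dm i).mulVec (r i) a) ^ 2 := by
            rw [← hmid, Finset.mul_sum]
        _ ≤ ∑ a, ∑ j, (Γ.mulVec (fun i => (Dm i).mulVec (r i) a) j) ^ 2 :=
            Finset.sum_le_sum fun a _ => (key1 a).1
    have hL0 : 0 ≤ smin Γ * mI * Rnorm :=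
      mul_nonneg (mul_nonneg (my_smin_nonneg Γ) hmI0) hR0
    exact (pow_le_pow_iff_left₀ hL0 (my_enorm_nonneg G) two_ne_zero).mp h2
  · have h2 : enorm2 G ^ 2 ≤ (smax Γ * MS * Rnorm) ^ 2 := by
      rw [hG2, mul_pow, mul_pow, hR2]
      calc ∑ a, ∑ j, (Γ.mulVec (fun i => (Dm i).mulVec (r i) a) j) ^ 2
          ≤ ∑ a, smax Γ ^ 2 * ∑ i, ((Dm i).mulVec (r i) a) ^ 2 :=
            Finset.sum_le_sum fun a _ => (key1 a).2
        _ = smax Γ ^ 2 * (∑ i, ∑ a, ((Dm i).mulVec (r i) a) ^ 2) := by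
            rw [← hmid, Finset.mul_sum]
        _ ≤ smax Γ ^ 2 * MS ^ 2 * (∑ i, ∑ a, r i a ^ 2) := by
            rw [mul_assoc]
            refine mul_le_mul_of_nonneg_left ?_ (sq_nonneg _)
            rw [Finset.mul_sum]
            refine Finset.sum_le_sum fun i _ => ?_
            exact le_trans (key2 i).2
              (mul_le_mul_of_nonneg_right (pow_le_pow_left₀ (my_smax_nonneg _ hsphd₀) (hMS_ge i) 2)
                (Finset.sum_nonneg fun a _ => sq_nonneg _))
    have hL0 : 0 ≤ smax Γ * MS * Rnorm :=
      mul_nonneg (mul_nonneg (my_smax_nonneg Γ hsphT) hMS0) hR0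
    exact (pow_le_pow_iff_left₀ (my_enorm_nonneg G) hL0 two_ne_zero).mp h2
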